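/- arXiv:1511.07331 — 3 statements merged into one kernel-verified Lean document; each statement's English description precedes it below -/
import Mathlib

section
/- Let S be a scheme and let f : Y → X and g : X → Z be morphisms of S-schemes. If f and g are both bumpy, then the composite g ∘ f : Y → Z is bumpy. -/
open AlgebraicGeometry CategoryTheory CategoryTheory.Limits

universe u

/-- A morphism of schemes is flat if all its stalk maps are flat ring maps. -/
def Scheme.Hom.IsFlat {X Y : Scheme.{u}} (f : Y.Hom X) : Prop :=
  ∀ y : Y, letI : Algebra (X.presheaf.stalk (f.base y)) (Y.presheaf.stalk y) :=
    (f.stalkMap y).hom.toAlgebra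
  Module.Flat (X.presheaf.stalk (f.base y)) (Y.presheaf.stalk y)

/-- A morphism of schemes is fpqc if it is faithfully flat and every quasi-compact open
subset of the target is the image of a quasi-compact open subset of the source. -/
def Scheme.Hom.IsFpqc {X Y : Scheme.{u}} (f : Y ⟶ X) : Prop :=
  Scheme.Hom.IsFlat f ∧ Function.Surjective f.base ∧
    ∀ V : Set X, IsOpen V → IsCompact V →
      ∃ U : Set Y, IsOpen U ∧ IsCompact U ∧ f.base '' U = V

variable {S : Scheme.{u}}

/-- The fiber of an `S`-scheme `gX : X ⟶ S` over a point `s : S`. -/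
noncomputable def Scheme.fiberAt {X : Scheme.{u}} (gX : X ⟶ S) (s : S) : Scheme.{u} :=
  pullback gX (S.fromSpecResidueField s)

/-- The morphism induced on fibers over `s : S` by a morphism of `S`-schemes. -/
noncomputable def Scheme.fiberMap {X Y : Scheme.{u}} (gY : Y ⟶ S) (gX : X ⟶ S)
    (f : Y ⟶ X) (w : f ≫ gX = gY) (s : S) :
    Scheme.fiberAt gY s ⟶ Scheme.fiberAt gX s :=
  pullback.map gY (S.fromSpecResidueField s) gX (S.fromSpecResidueField s)
    f (𝟙 _) (𝟙 _) (by simp [w]) (by simp)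

/-- A morphism of `S`-schemes is bumpy if the induced morphism on fibers over every
point `s : S` with nonempty target fiber is fpqc. -/
def Scheme.IsBumpy {X Y : Scheme.{u}} (gY : Y ⟶ S) (gX : X ⟶ S)
    (f : Y ⟶ X) (w : f ≫ gX = gY) : Prop :=
  ∀ s : S, Nonempty (Scheme.fiberAt gX s) → Scheme.Hom.IsFpqc (Scheme.fiberMap gY gX f w s)


lemma Scheme.Hom.IsFlat.comp' {X Y Z : Scheme.{u}} {f : Y ⟶ X} {g : X ⟶ Z}
    (hf : Scheme.Hom.IsFlat f) (hg : Scheme.Hom.IsFlat g) :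
    Scheme.Hom.IsFlat (f ≫ g) := by
  intro y
  letI := (f.stalkMap y).hom.toAlgebra
  letI := (g.stalkMap (f.base y)).hom.toAlgebra
  have hf' : RingHom.Flat (f.stalkMap y).hom := hf y
  have hg' : RingHom.Flat (g.stalkMap (f.base y)).hom := hg (f.base y)
  have h : RingHom.Flat ((f ≫ g).stalkMap y).hom := by
    rw [Scheme.Hom.stalkMap_comp]
    exact RingHom.Flat.comp hg' hf'
  exact h

lemma Scheme.Hom.IsFpqc.comp' {X Y Z : Scheme.{u}} {f : Y ⟶ X} {g : X ⟶ Z}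
    (hf : Scheme.Hom.IsFpqc f) (hg : Scheme.Hom.IsFpqc g) :
    Scheme.Hom.IsFpqc (f ≫ g) := by
  obtain ⟨hf1, hf2, hf3⟩ := hf
  obtain ⟨hg1, hg2, hg3⟩ := hg
  refine ⟨hf1.comp' hg1, ?_, ?_⟩
  · intro z
    obtain ⟨x, hx⟩ := hg2 z
    obtain ⟨y, hy⟩ := hf2 x
    exact ⟨y, by simp [hy, hx]⟩
  · intro V hV hVc
    obtain ⟨U, hU, hUc, hUV⟩ := hg3 V hV hVc
    obtain ⟨W, hW, hWc, hWU⟩ := hf3 U hU hUc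
    refine ⟨W, hW, hWc, ?_⟩
    have : (f ≫ g).base '' W = g.base '' (f.base '' W) := by
      rw [Set.image_image]; simp
    rw [this, hWU, hUV]

lemma Scheme.fiberMap_comp {X Y Z : Scheme.{u}} (gY : Y ⟶ S) (gX : X ⟶ S) (gZ : Z ⟶ S)
    (f : Y ⟶ X) (g : X ⟶ Z) (wf : f ≫ gX = gY) (wg : g ≫ gZ = gX) (s : S) :
    Scheme.fiberMap gY gZ (f ≫ g) (by rw [Category.assoc, wg, wf]) s =
      Scheme.fiberMap gY gX f wf s ≫ Scheme.fiberMap gX gZ g wg s := by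
  unfold Scheme.fiberMap
  unfold Scheme.fiberAt
  apply pullback.hom_ext <;> simp only [pullback.map, Category.assoc, pullback.lift_fst,
    pullback.lift_snd, pullback.lift_fst_assoc, pullback.lift_snd_assoc, Category.comp_id]

/-- The composite of bumpy morphisms of `S`-schemes is bumpy. -/
theorem Scheme.IsBumpy.comp {S X Y Z : Scheme.{u}} (gY : Y ⟶ S) (gX : X ⟶ S) (gZ : Z ⟶ S)
    (f : Y ⟶ X) (g : X ⟶ Z) (wf : f ≫ gX = gY) (wg : g ≫ gZ = gX)
    (hf : Scheme.IsBumpy gY gX f wf) (hg : Scheme.IsBumpy gX gZ g wg) :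
    Scheme.IsBumpy gY gZ (f ≫ g) (by rw [Category.assoc, wg, wf]) := by
  intro s hs
  have hgs := hg s hs
  have hXs : Nonempty (Scheme.fiberAt gX s) := by
    obtain ⟨z⟩ := hs
    obtain ⟨x, -⟩ := hgs.2.1 z
    exact ⟨x⟩
  have hfs := hf s hXs
  rw [Scheme.fiberMap_comp gY gX gZ f g wf wg s]
  exact hfs.comp' hgs
end

section
/- Let R be a discrete valuation ring of equal characteristic p > 0 (p prime) with uniformizer π, fraction field K, and residue field k. Consider the R-algebra homomorphism u : R[x]/(x^p, π²x) → R[t]/(t^p, πt) determined by x ↦ t. Then: (1) u is not injective (for instance the nonzero class of πx is sent to πt = 0); (2) the induced K-algebra homomorphism u ⊗_R K : (R[x]/(x^p, π²x)) ⊗_R K → (R[t]/(t^p, πt)) ⊗_R K is an isomorphism; (3) the induced k-algebra homomorphism u ⊗_R k : (R[x]/(x^p, π²x)) ⊗_R k → (R[t]/(t^p, πt)) ⊗_R k is an isomorphism. -/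
open Polynomial TensorProduct

/-- Auxiliary lemma: a surjective `R`-algebra map whose kernel elements all die in `F ⊗ ·`
becomes bijective after base change along `R → F`. -/
lemma aux_map_bijective {R A B F : Type} [CommRing R] [CommRing A] [CommRing B] [CommRing F]
    [Algebra R A] [Algebra R B] [Algebra R F] (u : A →ₐ[R] B)
    (hs : Function.Surjective u)
    (h0 : ∀ (c : F) (a : A), u a = 0 → c ⊗ₜ[R] a = (0 : F ⊗[R] A)) :
    Function.Bijective (Algebra.TensorProduct.map (AlgHom.id F F) u) := by
  have hfun : ⇑(Algebra.TensorProduct.map (AlgHom.id F F) u)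
      = ⇑(LinearMap.lTensor F u.toLinearMap) := by
    funext z
    induction z using TensorProduct.induction_on with
    | zero => simp
    | tmul c a => simp
    | add x y hx hy => simp [map_add, hx, hy]
  rw [hfun]
  have hs' : Function.Surjective u.toLinearMap := hs
  constructor
  · rw [← LinearMap.ker_eq_bot,
      (lTensor_exact F u.toLinearMap.exact_subtype_ker_map hs').linearMap_ker_eq]
    have hz : LinearMap.lTensor F (LinearMap.ker u.toLinearMap).subtype = 0 := by
      apply TensorProduct.ext'
      intro c n
      simp only [LinearMap.lTensor_tmul, Submodule.coe_subtype, LinearMap.zero_apply]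
      exact h0 c n n.2
    rw [hz, LinearMap.range_zero]
  · exact LinearMap.lTensor_surjective F hs'

/-- Over a discrete valuation ring `R` of equal characteristic `p > 0` with uniformizer `π`,
the `R`-algebra homomorphism `u : R[x]/(x^p, π²x) → R[t]/(t^p, πt)`, `x ↦ t`, is not
injective (the nonzero class of `πx` is sent to `πt = 0`), while the induced maps on
generic fibers (base change to `K = Frac R`) and on special fibers (base change to
`k = R/(π)`) are both isomorphisms. -/
theorem exists_algHom_not_injective_fiberwise_iso
    (R : Type) [CommRing R] [IsDomain R] [IsDiscreteValuationRing R]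
    (p : ℕ) (hp : p.Prime) [CharP R p] (π : R) (hπ : Irreducible π) :
    ∃ u : (R[X] ⧸ Ideal.span ({X ^ p, C (π ^ 2) * X} : Set R[X])) →ₐ[R]
        (R[X] ⧸ Ideal.span ({X ^ p, C π * X} : Set R[X])),
      u (Ideal.Quotient.mk _ X) = Ideal.Quotient.mk _ X ∧
      π • (Ideal.Quotient.mk (Ideal.span ({X ^ p, C (π ^ 2) * X} : Set R[X])) X) ≠ 0 ∧
      π • (Ideal.Quotient.mk (Ideal.span ({X ^ p, C π * X} : Set R[X])) X) = 0 ∧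
      ¬ Function.Injective u ∧
      Function.Bijective
        (Algebra.TensorProduct.map (AlgHom.id (FractionRing R) (FractionRing R)) u) ∧
      Function.Bijective
        (Algebra.TensorProduct.map
          (AlgHom.id (R ⧸ IsLocalRing.maximalIdeal R) (R ⧸ IsLocalRing.maximalIdeal R)) u) := by
  set I : Ideal R[X] := Ideal.span ({X ^ p, C (π ^ 2) * X} : Set R[X]) with hI
  set J : Ideal R[X] := Ideal.span ({X ^ p, C π * X} : Set R[X]) with hJ
  have hXpJ : (X : R[X]) ^ p ∈ J := Ideal.subset_span (by simp)
  have hπXJ : (C π * X : R[X]) ∈ J := Ideal.subset_span (by simp)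
  have hXpI : (X : R[X]) ^ p ∈ I := Ideal.subset_span (by simp)
  have hπ2XI : (C (π ^ 2) * X : R[X]) ∈ I := Ideal.subset_span (by simp)
  have hIJ : I ≤ J := by
    rw [hI, Ideal.span_le]
    rintro f hf
    rcases hf with rfl | rfl
    · exact hXpJ
    · have : C (π ^ 2) * X = C π * (C π * X) := by
        rw [pow_two, map_mul, mul_assoc]
      rw [this]
      exact Ideal.mul_mem_left _ _ hπXJ
  -- the algebra hom
  set u : (R[X] ⧸ I) →ₐ[R] (R[X] ⧸ J) :=
    Ideal.Quotient.liftₐ I (Ideal.Quotient.mkₐ R J) (fun a ha => by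
      rw [Ideal.Quotient.mkₐ_eq_mk, Ideal.Quotient.eq_zero_iff_mem]
      exact hIJ ha) with hudef
  have hu : ∀ f : R[X], u (Ideal.Quotient.mk I f) = Ideal.Quotient.mk J f := fun f => by
    rw [hudef, Ideal.Quotient.liftₐ_apply]
    rfl
  have hsmulI : ∀ (r : R) (f : R[X]),
      r • Ideal.Quotient.mk I f = Ideal.Quotient.mk I (C r * f) := fun r f => by
    rw [← Ideal.Quotient.mkₐ_eq_mk R I, ← map_smul, smul_eq_C_mul]
  have hsmulJ : ∀ (r : R) (f : R[X]),
      r • Ideal.Quotient.mk J f = Ideal.Quotient.mk J (C r * f) := fun r f => by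
    rw [← Ideal.Quotient.mkₐ_eq_mk R J, ← map_smul, smul_eq_C_mul]
  -- πx is nonzero in R[x]/(x^p, π²x)
  have hne : π • Ideal.Quotient.mk I X ≠ 0 := by
    rw [hsmulI, Ne, Ideal.Quotient.eq_zero_iff_mem, hI, Ideal.mem_span_pair]
    rintro ⟨g, h, e⟩
    have e1 := congrArg (fun q : R[X] => q.coeff 1) e
    simp only [coeff_add] at e1
    have hg : (g * X ^ p).coeff 1 = 0 := by
      have h2 := hp.two_le
      rw [coeff_mul_X_pow', if_neg (by omega)]
    have hh : (h * (C (π ^ 2) * X)).coeff 1 = π ^ 2 * h.coeff 0 := by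
      rw [show h * (C (π ^ 2) * X) = C (π ^ 2) * (h * X) by ring, coeff_C_mul,
        show (1 : ℕ) = 0 + 1 from rfl, coeff_mul_X]
    have hc : (C π * X : R[X]).coeff 1 = π := by
      rw [coeff_C_mul, coeff_X_one, mul_one]
    rw [hg, hh, hc, zero_add] at e1
    have : π * (π * h.coeff 0) = π * 1 := by
      rw [mul_one, ← mul_assoc, ← pow_two]; exact e1
    exact hπ.not_isUnit (IsUnit.of_mul_eq_one (a := π) (h.coeff 0) (mul_left_cancel₀ hπ.ne_zero this))
  -- πx is zero in R[x]/(x^p, πx)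
  have hzero : π • Ideal.Quotient.mk J X = 0 := by
    rw [hsmulJ, Ideal.Quotient.eq_zero_iff_mem]
    exact hπXJ
  -- kernel elements are π-torsion and π-divisible
  have hker : ∀ f ∈ J, Ideal.Quotient.mk I (C π * f) = 0 ∧
      ∃ a, Ideal.Quotient.mk I f = π • a := by
    intro f hf
    induction hf using Submodule.span_induction with
    | mem g hg =>
      rcases hg with rfl | rfl
      · refine ⟨?_, 0, ?_⟩
        · rw [Ideal.Quotient.eq_zero_iff_mem]
          exact Ideal.mul_mem_left _ _ hXpI
        · rw [smul_zero, Ideal.Quotient.eq_zero_iff_mem]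
          exact hXpI
      · refine ⟨?_, Ideal.Quotient.mk I X, ?_⟩
        · rw [show C π * (C π * X) = C (π ^ 2) * X by rw [pow_two, map_mul]; ring,
            Ideal.Quotient.eq_zero_iff_mem]
          exact hπ2XI
        · rw [hsmulI]
    | zero => exact ⟨by rw [mul_zero, map_zero], 0, by rw [map_zero, smul_zero]⟩
    | add a b ha hb iha ihb =>
      obtain ⟨iha1, a1, iha2⟩ := iha
      obtain ⟨ihb1, b1, ihb2⟩ := ihb
      refine ⟨?_, a1 + b1, ?_⟩
      · rw [mul_add, map_add, iha1, ihb1, add_zero]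
      · rw [map_add, iha2, ihb2, smul_add]
    | smul r g hg ihg =>
      obtain ⟨ihg1, a1, ihg2⟩ := ihg
      refine ⟨?_, Ideal.Quotient.mk I r * a1, ?_⟩
      · rw [smul_eq_mul, show C π * (r * g) = r * (C π * g) by ring, map_mul, ihg1, mul_zero]
      · rw [smul_eq_mul, map_mul, ihg2, mul_smul_comm]
  -- u is surjective
  have hsurj : Function.Surjective u := by
    intro b
    obtain ⟨f, rfl⟩ := Ideal.Quotient.mk_surjective b
    exact ⟨Ideal.Quotient.mk I f, hu f⟩
  -- membership in kernel of u
  have hmemJ : ∀ a : R[X] ⧸ I, u a = 0 →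
      ∃ f ∈ J, Ideal.Quotient.mk I f = a := by
    intro a ha
    obtain ⟨f, rfl⟩ := Ideal.Quotient.mk_surjective a
    rw [hu, Ideal.Quotient.eq_zero_iff_mem] at ha
    exact ⟨f, ha, rfl⟩
  refine ⟨u, hu X, hne, hzero, ?_, ?_, ?_⟩
  · -- not injective
    intro hinj
    apply hne
    apply hinj
    rw [map_zero, map_smul, hu, hzero]
  · -- generic fiber
    apply aux_map_bijective u hsurj
    intro c a ha
    obtain ⟨f, hfJ, rfl⟩ := hmemJ a ha
    have htors : π • Ideal.Quotient.mk I f = 0 := by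
      rw [hsmulI]; exact (hker f hfJ).1
    have hπK : algebraMap R (FractionRing R) π ≠ 0 := by
      simp [IsFractionRing.to_map_eq_zero_iff, hπ.ne_zero]
    have hc : c = π • ((algebraMap R (FractionRing R) π)⁻¹ * c) := by
      rw [Algebra.smul_def, ← mul_assoc, mul_inv_cancel₀ hπK, one_mul]
    rw [hc, TensorProduct.smul_tmul, htors, tmul_zero]
  · -- special fiber
    apply aux_map_bijective u hsurj
    intro c a ha
    obtain ⟨f, hfJ, rfl⟩ := hmemJ a ha
    obtain ⟨a', ha'⟩ := (hker f hfJ).2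
    have hπk : π • c = 0 := by
      rw [Algebra.smul_def, Ideal.Quotient.algebraMap_eq,
        Ideal.Quotient.eq_zero_iff_mem.mpr
          ((IsLocalRing.mem_maximalIdeal π).mpr (mem_nonunits_iff.mpr hπ.not_isUnit)),
        zero_mul]
    rw [ha', ← TensorProduct.smul_tmul, hπk, zero_tmul]
end

section
/- Let R be a discrete valuation ring with uniformizer π whose residue field has characteristic p > 0 (p prime), and let A be either R[x]/(x^p − x, πx) or R[x]/(x^p, πx). Then A carries a Hopf algebra structure over R whose comultiplication Δ : A → A ⊗_R A, counit ε : A → R, and antipode S : A → A are the R-algebra homomorphisms determined by Δ(x) = x ⊗ 1 + 1 ⊗ x, ε(x) = 0, S(x) = −x. In particular these assignments are well defined: in A ⊗_R A one has π·(x ⊗ 1 + 1 ⊗ x) = 0 and (x ⊗ 1 + 1 ⊗ x)^p − (x ⊗ 1 + 1 ⊗ x) = 0 (respectively (x ⊗ 1 + 1 ⊗ x)^p = 0), because π x = 0 in A and p lies in the maximal ideal (π) of R. -/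
open Polynomial TensorProduct

/-- The ring `R[x]/(f, πx)`. For `f = x^p − x` (resp. `f = x^p`) this is the coordinate
ring of the quasi-finite non-flat group scheme `G` (resp. `H`) of Example 3.7. -/
abbrev bumpyRing (R : Type) [CommRing R] (π : R) (f : R[X]) : Type :=
  R[X] ⧸ Ideal.span ({f, C π * X} : Set R[X])

/-- The class of `x` in `R[x]/(f, πx)`. -/
noncomputable abbrev bumpyGen (R : Type) [CommRing R] (π : R) (f : R[X]) :
    bumpyRing R π f :=
  Ideal.Quotient.mk (Ideal.span ({f, C π * X} : Set R[X])) X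

theorem bumpy_algHom_ext {R : Type} [CommRing R] {π : R} {f : R[X]}
    {B : Type} [Semiring B] [Algebra R B] {φ ψ : bumpyRing R π f →ₐ[R] B}
    (h : φ (bumpyGen R π f) = ψ (bumpyGen R π f)) : φ = ψ :=
  Ideal.Quotient.algHom_ext R (Polynomial.algHom_ext h)

theorem bumpy_pi_smul_gen (R : Type) [CommRing R] (π : R) (f : R[X]) :
    π • bumpyGen R π f = 0 := by
  have h1 : π • bumpyGen R π f
      = Ideal.Quotient.mkₐ R (Ideal.span ({f, C π * X} : Set R[X])) (π • X) :=
    (map_smul (Ideal.Quotient.mkₐ R _) π X).symm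
  rw [h1, ← C_mul', Ideal.Quotient.mkₐ_eq_mk, Ideal.Quotient.eq_zero_iff_mem]
  exact Ideal.subset_span (by simp)

theorem bumpy_aeval_gen (R : Type) [CommRing R] (π : R) (f : R[X]) :
    Polynomial.aeval (bumpyGen R π f) f = 0 := by
  have h1 : bumpyGen R π f
      = Ideal.Quotient.mkₐ R (Ideal.span ({f, C π * X} : Set R[X])) X := rfl
  rw [h1, Polynomial.aeval_algHom_apply, Polynomial.aeval_X_left_apply,
    Ideal.Quotient.mkₐ_eq_mk, Ideal.Quotient.eq_zero_iff_mem]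
  exact Ideal.subset_span (by simp)

/-- The freshman's dream for `x ⊗ 1 + 1 ⊗ x` when `p • x = 0`. -/
theorem tensor_add_pow_prime {R A : Type} [CommRing R] [CommRing A] [Algebra R A]
    {p : ℕ} (hp : p.Prime) (a : A) (hpa : (p : R) • a = 0) :
    (a ⊗ₜ[R] (1 : A) + (1 : A) ⊗ₜ[R] a) ^ p
      = (a ^ p) ⊗ₜ[R] (1 : A) + (1 : A) ⊗ₜ[R] (a ^ p) := by
  have hp1 : (p : A ⊗[R] A) * (a ⊗ₜ[R] (1 : A)) = 0 := by
    rw [← nsmul_eq_mul, ← Nat.cast_smul_eq_nsmul R, TensorProduct.smul_tmul', hpa,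
      TensorProduct.zero_tmul]
  rw [add_pow_prime_eq hp]
  have hsum : (p : A ⊗[R] A) * ∑ k ∈ Finset.Ioo 0 p,
      (a ⊗ₜ[R] (1 : A)) ^ k * ((1 : A) ⊗ₜ[R] a) ^ (p - k) * ((p.choose k / p : ℕ)) = 0 := by
    rw [Finset.mul_sum]
    apply Finset.sum_eq_zero
    intro k hk
    rw [Finset.mem_Ioo] at hk
    have hk1 : (a ⊗ₜ[R] (1 : A)) ^ k
        = (a ⊗ₜ[R] (1 : A)) * (a ⊗ₜ[R] (1 : A)) ^ (k - 1) := by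
      conv_lhs => rw [← Nat.succ_pred_eq_of_pos hk.1]
      rw [pow_succ', Nat.pred_eq_sub_one]
    rw [hk1]
    linear_combination ((a ⊗ₜ[R] (1 : A)) ^ (k - 1) * ((1 : A) ⊗ₜ[R] a) ^ (p - k) *
      ((p.choose k / p : ℕ) : A ⊗[R] A)) * hp1
  rw [hp1, zero_mul, zero_mul, add_zero]
  simp [Algebra.TensorProduct.tmul_pow]

/-- The `R`-algebra map `R[x]/(f, πx) → B` sending `x` to a point `b` with
`f(b) = 0` and `π b = 0`. -/
noncomputable def bumpyLift {R : Type} [CommRing R] (π : R) (f : R[X]) {B : Type}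
    [Semiring B] [Algebra R B] (b : B) (h1 : Polynomial.aeval b f = 0)
    (h2 : π • b = 0) : bumpyRing R π f →ₐ[R] B :=
  Ideal.Quotient.liftₐ _ (Polynomial.aeval b) (by
    intro g hg
    have hle : Ideal.span ({f, C π * X} : Set R[X])
        ≤ RingHom.ker (Polynomial.aeval b : R[X] →ₐ[R] B) := by
      rw [Ideal.span_le]
      intro g hg
      simp only [Set.mem_insert_iff, Set.mem_singleton_iff] at hg
      rcases hg with rfl | rfl
      · exact h1
      · show Polynomial.aeval b (C π * X) = 0
        rw [map_mul, aeval_C, aeval_X, ← Algebra.smul_def, h2]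
    exact RingHom.mem_ker.mp (hle hg))

theorem bumpyLift_gen {R : Type} [CommRing R] (π : R) (f : R[X]) {B : Type}
    [Semiring B] [Algebra R B] (b : B) (h1 : Polynomial.aeval b f = 0)
    (h2 : π • b = 0) : bumpyLift π f b h1 h2 (bumpyGen R π f) = b := by
  show Ideal.Quotient.liftₐ _ _ _ (Ideal.Quotient.mk _ X) = b
  exact Polynomial.aeval_X b

set_option synthInstance.maxHeartbeats 1000000 in
set_option maxHeartbeats 1000000 in
/-- Let `R` be a discrete valuation ring with uniformizer `π` and residue characteristic
`p > 0`, and let `A = R[x]/(f, πx)` where `f = x^p − x` or `f = x^p`. Then the assignments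
`Δ(x) = x ⊗ 1 + 1 ⊗ x`, `ε(x) = 0`, `S(x) = −x` are well defined
(`π·(x ⊗ 1 + 1 ⊗ x) = 0` and `f(x ⊗ 1 + 1 ⊗ x) = 0` in `A ⊗_R A`) and determine
`R`-algebra homomorphisms giving `A` the structure of a Hopf algebra over `R`:
the comultiplication is coassociative and counital and the antipode satisfies the
antipode axioms. -/
theorem hopfAlgebra_structure
    (R : Type) [CommRing R] [IsDomain R] [IsDiscreteValuationRing R]
    (p : ℕ) (hp : p.Prime) (π : R) (hπ : Irreducible π)
    [CharP (R ⧸ IsLocalRing.maximalIdeal R) p]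
    (f : R[X]) (hf : f = X ^ p - X ∨ f = X ^ p) :
    -- well-definedness of the comultiplication on the generator
    π • (bumpyGen R π f ⊗ₜ[R] (1 : bumpyRing R π f) +
        (1 : bumpyRing R π f) ⊗ₜ[R] bumpyGen R π f) = 0 ∧
    Polynomial.aeval (bumpyGen R π f ⊗ₜ[R] (1 : bumpyRing R π f) +
        (1 : bumpyRing R π f) ⊗ₜ[R] bumpyGen R π f) f = 0 ∧
    -- the Hopf algebra structure maps
    ∃ (Δ : bumpyRing R π f →ₐ[R] bumpyRing R π f ⊗[R] bumpyRing R π f)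
      (ε : bumpyRing R π f →ₐ[R] R)
      (Sa : bumpyRing R π f →ₐ[R] bumpyRing R π f),
      -- values on the generator
      Δ (bumpyGen R π f) =
        bumpyGen R π f ⊗ₜ[R] (1 : bumpyRing R π f) +
          (1 : bumpyRing R π f) ⊗ₜ[R] bumpyGen R π f ∧
      ε (bumpyGen R π f) = 0 ∧
      Sa (bumpyGen R π f) = - bumpyGen R π f ∧
      -- coassociativity
      (Algebra.TensorProduct.assoc R R R (bumpyRing R π f) (bumpyRing R π f)
            (bumpyRing R π f)).toAlgHom.comp
          ((Algebra.TensorProduct.map Δ (AlgHom.id R (bumpyRing R π f))).comp Δ) =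
        (Algebra.TensorProduct.map (AlgHom.id R (bumpyRing R π f)) Δ).comp Δ ∧
      -- counit axioms
      (Algebra.TensorProduct.lid R (bumpyRing R π f)).toAlgHom.comp
          ((Algebra.TensorProduct.map ε (AlgHom.id R (bumpyRing R π f))).comp Δ) =
        AlgHom.id R (bumpyRing R π f) ∧
      (Algebra.TensorProduct.rid R R (bumpyRing R π f)).toAlgHom.comp
          ((Algebra.TensorProduct.map (AlgHom.id R (bumpyRing R π f)) ε).comp Δ) =
        AlgHom.id R (bumpyRing R π f) ∧
      -- antipode axioms
      (Algebra.TensorProduct.lmul' R (S := bumpyRing R π f)).comp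
          ((Algebra.TensorProduct.map Sa (AlgHom.id R (bumpyRing R π f))).comp Δ) =
        (Algebra.ofId R (bumpyRing R π f)).comp ε ∧
      (Algebra.TensorProduct.lmul' R (S := bumpyRing R π f)).comp
          ((Algebra.TensorProduct.map (AlgHom.id R (bumpyRing R π f)) Sa).comp Δ) =
        (Algebra.ofId R (bumpyRing R π f)).comp ε := by
  classical
  have hπa : π • bumpyGen R π f = 0 := bumpy_pi_smul_gen R π f
  have haf : Polynomial.aeval (bumpyGen R π f) f = 0 := bumpy_aeval_gen R π f
  obtain ⟨c, hc⟩ : ∃ c : R, (p : R) = π * c := by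
    have h1 : ((p : ℕ) : R ⧸ IsLocalRing.maximalIdeal R) = 0 := CharP.cast_eq_zero _ p
    have h2 : (p : R) ∈ IsLocalRing.maximalIdeal R := by
      rwa [← map_natCast (Ideal.Quotient.mk (IsLocalRing.maximalIdeal R)),
        Ideal.Quotient.eq_zero_iff_mem] at h1
    rw [hπ.maximalIdeal_eq, Ideal.mem_span_singleton] at h2
    exact h2
  have hpa : (p : R) • bumpyGen R π f = 0 := by
    rw [hc, mul_smul, smul_comm, hπa, smul_zero]
  have hwd1 : π • (bumpyGen R π f ⊗ₜ[R] (1 : bumpyRing R π f) +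
      (1 : bumpyRing R π f) ⊗ₜ[R] bumpyGen R π f) = 0 := by
    rw [smul_add, TensorProduct.smul_tmul', hπa, TensorProduct.zero_tmul,
      ← TensorProduct.tmul_smul, hπa, TensorProduct.tmul_zero, add_zero]
  have htp := tensor_add_pow_prime hp (bumpyGen R π f) hpa
  have hwd2 : Polynomial.aeval (bumpyGen R π f ⊗ₜ[R] (1 : bumpyRing R π f) +
      (1 : bumpyRing R π f) ⊗ₜ[R] bumpyGen R π f) f = 0 := by
    rcases hf with rfl | rfl
    · have hap : bumpyGen R π (X ^ p - X) ^ p = bumpyGen R π (X ^ p - X) := by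
        rw [map_sub, map_pow, aeval_X] at haf
        exact sub_eq_zero.mp haf
      rw [map_sub, aeval_X_pow, aeval_X, htp, hap, sub_self]
    · have hap : bumpyGen R π (X ^ p) ^ p = 0 := by
        rwa [map_pow, aeval_X] at haf
      rw [aeval_X_pow, htp, hap, TensorProduct.zero_tmul, TensorProduct.tmul_zero,
        add_zero]
  have hε1 : Polynomial.aeval (0 : R) f = 0 := by
    rcases hf with rfl | rfl <;> simp [zero_pow hp.ne_zero]
  have hε2 : π • (0 : R) = 0 := smul_zero π
  have hS1 : Polynomial.aeval (- bumpyGen R π f) f = 0 := by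
    rcases hf with rfl | rfl
    · have hap : bumpyGen R π (X ^ p - X) ^ p = bumpyGen R π (X ^ p - X) := by
        rw [map_sub, map_pow, aeval_X] at haf
        exact sub_eq_zero.mp haf
      rw [map_sub, map_pow, aeval_X]
      rcases hp.eq_two_or_odd' with h2 | hodd
      · subst h2
        have h4 := hpa
        rw [Nat.cast_smul_eq_nsmul, two_smul] at h4
        linear_combination hap + h4
      · have h5 := hodd.neg_pow (bumpyGen R π (X ^ p - X))
        linear_combination h5 - hap
    · have hap : bumpyGen R π (X ^ p) ^ p = 0 := by
        rwa [map_pow, aeval_X] at haf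
      have h5 := neg_pow (bumpyGen R π (X ^ p)) p
      rw [map_pow, aeval_X]
      linear_combination h5 + ((-1 : bumpyRing R π (X ^ p)) ^ p) * hap
  have hS2 : π • (- bumpyGen R π f) = 0 := by rw [smul_neg, hπa, neg_zero]
  refine ⟨hwd1, hwd2,
    bumpyLift π f _ hwd2 hwd1, bumpyLift π f (0 : R) hε1 hε2,
    bumpyLift π f (- bumpyGen R π f) hS1 hS2,
    bumpyLift_gen π f _ hwd2 hwd1, bumpyLift_gen π f (0 : R) hε1 hε2,
    bumpyLift_gen π f (- bumpyGen R π f) hS1 hS2, ?_, ?_, ?_, ?_, ?_⟩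
  · apply bumpy_algHom_ext
    simp [bumpyLift_gen, Algebra.TensorProduct.one_def, tmul_add, add_tmul,
      (bumpyLift π f _ hwd2 hwd1).map_one]
    have h1 := (bumpyLift π f _ hwd2 hwd1).map_one
    erw [h1]
    simp [Algebra.TensorProduct.one_def, tmul_add, add_tmul]
    abel
  · apply bumpy_algHom_ext
    simp [bumpyLift_gen]
  · apply bumpy_algHom_ext
    simp [bumpyLift_gen]
  · apply bumpy_algHom_ext
    simp [bumpyLift_gen, Algebra.ofId_apply]
  · apply bumpy_algHom_ext
    simp [bumpyLift_gen, Algebra.ofId_apply]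
end
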